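/- Let Y_1, Y_2, … be a sequence of independent nonnegative random variables, each Y_i taking values in [0,1], and define interarrival times X_n = ∏_{i=1}^n Y_i, n = 1, 2, …, with associated counting process N(t) = sup{n ≥ 0 : X_1 + ⋯ + X_n ≤ t}. If T is a DFR nonnegative random variable independent of the process and P(T = 0)·P(Y_1 = 0) = 0 (T and Y_1 do not both have positive mass at 0), then N(T) is d-DFR. -/

import Mathlib

open MeasureTheory ProbabilityTheory Filter Topology
open scoped ENNReal NNReal

variable {Ω : Type*} [MeasurableSpace Ω]

/-- Survival function of a random variable `T`: `F̄_T(t) = P(T > t)`. -/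
noncomputable def surv (μ : Measure Ω) (T : Ω → ℝ) (t : ℝ) : ℝ :=
  (μ {ω | t < T ω}).toReal

/-- `T` has the decreasing failure rate (DFR) property:
`F̄_T(s+z)·F̄_T(t) ≤ F̄_T(t+z)·F̄_T(s)` for all `0 ≤ s ≤ t` and `z ≥ 0`
(log-convexity of the survival function on `[0,∞)`). -/
def IsDFR (μ : Measure Ω) (T : Ω → ℝ) : Prop :=
  ∀ s t z : ℝ, 0 ≤ s → s ≤ t → 0 ≤ z →
    μ {ω | s + z < T ω} * μ {ω | t < T ω} ≤ μ {ω | t + z < T ω} * μ {ω | s < T ω}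

/-- Arrival times: `S n = X 1 + ⋯ + X n` (with 0-based indexing of the
interarrival times, `X i` is the `(i+1)`-st interarrival time), `S 0 = 0`. -/
noncomputable def arr (X : ℕ → Ω → ℝ) (n : ℕ) (ω : Ω) : ℝ :=
  ∑ i ∈ Finset.range n, X i ω

/-- The counting process `N(t) = sup {n ≥ 0 : S n ≤ t}` (valued in `ℕ∞`,
allowing infinitely many arrivals). -/
noncomputable def countN (X : ℕ → Ω → ℝ) (t : ℝ) (ω : Ω) : ℕ∞ :=
  sSup ((fun n : ℕ => (n : ℕ∞)) '' {n : ℕ | arr X n ω ≤ t})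

/-- A (possibly defective) `ℕ∞`-valued random variable `M` is discrete DFR:
`P(M ≥ n+1)² ≤ P(M ≥ n)·P(M ≥ n+2)` for all `n`. -/
def IsdDFR (μ : Measure Ω) (M : Ω → ℕ∞) : Prop :=
  ∀ n : ℕ,
    μ {ω | (n : ℕ∞) + 1 ≤ M ω} ^ 2 ≤
      μ {ω | (n : ℕ∞) ≤ M ω} * μ {ω | (n : ℕ∞) + 2 ≤ M ω}


section Helpers

lemma countN_ge_iff (X : ℕ → Ω → ℝ) (hX : ∀ n ω, 0 ≤ X n ω)
    {t : ℝ} (ht : 0 ≤ t) (ω : Ω) (n : ℕ) :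
    (n : ℕ∞) ≤ countN X t ω ↔ arr X n ω ≤ t := by
  have hmono : ∀ {a b : ℕ}, a ≤ b → arr X a ω ≤ arr X b ω := fun {a b} hab =>
    Finset.sum_le_sum_of_subset_of_nonneg (Finset.range_subset_range.2 hab) (fun i _ _ => hX i ω)
  constructor
  · intro h
    by_contra hc
    push_neg at hc
    have hn : n ≠ 0 := by
      rintro rfl
      simp [arr] at hc
      linarith
    have hsup : countN X t ω ≤ ((n - 1 : ℕ) : ℕ∞) := by
      apply sSup_le
      rintro k ⟨m, hm, rfl⟩
      have hmn : m < n := by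
        by_contra hmn
        push_neg at hmn
        exact absurd (le_trans (hmono hmn) hm) (not_le.2 hc)
      have hmle : m ≤ n - 1 := by omega
      show (m : ℕ∞) ≤ ((n - 1 : ℕ) : ℕ∞)
      exact_mod_cast hmle
    have h2 : (n : ℕ∞) ≤ ((n - 1 : ℕ) : ℕ∞) := le_trans h hsup
    have : n ≤ n - 1 := by exact_mod_cast h2
    omega
  · intro h
    exact le_sSup ⟨n, h, rfl⟩

lemma tendsto_measure_lt_seq (μ : Measure Ω) [IsFiniteMeasure μ]
    {T : Ω → ℝ} (hT : Measurable T) (c : ℝ) {z : ℝ} (hz : 0 < z) :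
    Tendsto (fun k : ℕ => μ {ω | c - z / ((k : ℝ) + 1) < T ω}) atTop
      (𝓝 (μ {ω | c ≤ T ω})) := by
  have hint : {ω | c ≤ T ω} = ⋂ k : ℕ, {ω | c - z / ((k : ℝ) + 1) < T ω} := by
    ext ω
    simp only [Set.mem_iInter, Set.mem_setOf_eq]
    constructor
    · intro h k
      have : 0 < z / ((k : ℝ) + 1) := by positivity
      linarith
    · intro h
      by_contra hcon
      push_neg at hcon
      obtain ⟨k, hk⟩ := exists_nat_gt (z / (c - T ω))
      have h1 : 0 < c - T ω := by linarith
      have h3 : z < (k : ℝ) * (c - T ω) := by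
        rw [← div_lt_iff₀ h1]
        exact hk
      have h2 : z / ((k : ℝ) + 1) < c - T ω := by
        rw [div_lt_iff₀ (by positivity : (0:ℝ) < (k : ℝ) + 1)]
        nlinarith
      linarith [h k]
  rw [hint]
  exact tendsto_measure_iInter_atTop
    (fun k => (measurableSet_lt measurable_const hT).nullMeasurableSet)
    (fun a b hab ω hω => by
      simp only [Set.mem_setOf_eq] at *
      have hab' : ((a : ℝ)) ≤ (b : ℝ) := Nat.cast_le.mpr hab
      have hz' : z / ((b : ℝ) + 1) ≤ z / ((a : ℝ) + 1) := by gcongr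
      linarith)
    ⟨0, measure_ne_top μ _⟩

lemma measure_le_logconvex (μ : Measure Ω) [IsProbabilityMeasure μ]
    {T : Ω → ℝ} (hT : Measurable T) (hDFR_ : ∀ s t z : ℝ, 0 ≤ s → s ≤ t → 0 ≤ z →
      μ {ω | s + z < T ω} * μ {ω | t < T ω} ≤ μ {ω | t + z < T ω} * μ {ω | s < T ω})
    {s z : ℝ} (hs : 0 ≤ s) (hz : 0 ≤ z) :
    μ {ω | s + z ≤ T ω} * μ {ω | s + z ≤ T ω}
      ≤ μ {ω | s ≤ T ω} * μ {ω | s + 2 * z ≤ T ω} := by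
  rcases hz.eq_or_lt with rfl | hzpos
  · norm_num
  · have key : ∀ k : ℕ,
        μ {ω | s + z - z / ((k : ℝ) + 1) < T ω} * μ {ω | s + z - z / ((k : ℝ) + 1) < T ω}
          ≤ μ {ω | s + 2 * z - 2 * z / ((k : ℝ) + 1) < T ω} * μ {ω | s < T ω} := by
      intro k
      have hεpos : 0 < z / ((k : ℝ) + 1) := by positivity
      have hεle : z / ((k : ℝ) + 1) ≤ z := div_le_self hz (by norm_num)
      have h := hDFR_ s (s + z - z / ((k : ℝ) + 1)) (z - z / ((k : ℝ) + 1)) hs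
        (by linarith) (by linarith)
      have e1 : s + (z - z / ((k : ℝ) + 1)) = s + z - z / ((k : ℝ) + 1) := by ring
      have e2 : s + z - z / ((k : ℝ) + 1) + (z - z / ((k : ℝ) + 1))
          = s + 2 * z - 2 * z / ((k : ℝ) + 1) := by ring
      rw [e1, e2] at h
      exact h
    have L1 := tendsto_measure_lt_seq μ hT (s + z) hzpos
    have L2 := tendsto_measure_lt_seq μ hT (s + 2 * z) (by positivity : (0:ℝ) < 2 * z)
    have lim := le_of_tendsto_of_tendsto'
      (ENNReal.Tendsto.mul L1 (Or.inr (measure_ne_top μ _)) L1 (Or.inr (measure_ne_top μ _)))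
      (ENNReal.Tendsto.mul L2 (Or.inr (measure_ne_top μ _)) tendsto_const_nhds
        (Or.inr (measure_ne_top μ _)))
      key
    calc μ {ω | s + z ≤ T ω} * μ {ω | s + z ≤ T ω}
        ≤ μ {ω | s + 2 * z ≤ T ω} * μ {ω | s < T ω} := lim
      _ ≤ μ {ω | s + 2 * z ≤ T ω} * μ {ω | s ≤ T ω} :=
          mul_le_mul_right (measure_mono (Set.setOf_subset_setOf.mpr fun ω h => le_of_lt h)) _
      _ = μ {ω | s ≤ T ω} * μ {ω | s + 2 * z ≤ T ω} := mul_comm _ _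

noncomputable def snn (n : ℕ) (y : ℕ → ℝ) : ℝ :=
  ∑ k ∈ Finset.range n, ∏ i ∈ Finset.range (k + 1), y i

lemma snn_measurable (n : ℕ) : Measurable (snn n) :=
  Finset.measurable_sum _ fun k _ => Finset.measurable_prod _ fun i _ => measurable_pi_apply i

noncomputable def gsurv (μ : Measure Ω) (T : Ω → ℝ) (r : ℝ) : ℝ≥0∞ :=
  μ {ω | r ≤ T ω}

lemma core (μ : Measure Ω) [IsProbabilityMeasure μ]
    {T : Ω → ℝ} (hT : Measurable T) (hDFR_ : ∀ s t z : ℝ, 0 ≤ s → s ≤ t → 0 ≤ z →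
      μ {ω | s + z < T ω} * μ {ω | t < T ω} ≤ μ {ω | t + z < T ω} * μ {ω | s < T ω})
    (ν : Measure (ℕ → ℝ)) (hae : ∀ᵐ y ∂ν, ∀ i, y i ∈ Set.Icc (0:ℝ) 1) (n : ℕ) :
    (∫⁻ y, gsurv μ T (snn (n+1) y) ∂ν) ^ 2 ≤
      (∫⁻ y, gsurv μ T (snn n y) ∂ν) * (∫⁻ y, gsurv μ T (snn (n+2) y) ∂ν) := by
  have hganti : Antitone (gsurv μ T) := fun r r' h =>
    measure_mono (Set.setOf_subset_setOf.mpr fun ω hω => le_trans h hω)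
  have hgmeas : Measurable (gsurv μ T) := hganti.measurable
  have hm : ∀ m, AEMeasurable (fun y => gsurv μ T (snn m y)) ν := fun m =>
    (hgmeas.comp (snn_measurable m)).aemeasurable
  have hpt : ∀ᵐ y ∂ν, gsurv μ T (snn (n+1) y) * gsurv μ T (snn (n+1) y)
      ≤ gsurv μ T (snn n y) * gsurv μ T (snn (n+2) y) := by
    filter_upwards [hae] with y hy
    have hynn : ∀ i, 0 ≤ y i := fun i => (hy i).1
    have hznn : 0 ≤ ∏ i ∈ Finset.range (n+1), y i := Finset.prod_nonneg fun i _ => hynn i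
    have hsnn0 : 0 ≤ snn n y :=
      Finset.sum_nonneg fun k _ => Finset.prod_nonneg fun i _ => hynn i
    have h1 : snn (n+1) y = snn n y + ∏ i ∈ Finset.range (n+1), y i :=
      Finset.sum_range_succ _ n
    have h2 : snn (n+2) y = snn (n+1) y + (∏ i ∈ Finset.range (n+1), y i) * y (n+1) := by
      show (∑ k ∈ Finset.range (n+1+1), ∏ i ∈ Finset.range (k+1), y i) = _
      rw [Finset.sum_range_succ, Finset.prod_range_succ]
      rfl
    have hle : snn (n+2) y ≤ snn n y + 2 * ∏ i ∈ Finset.range (n+1), y i := by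
      have hmul : (∏ i ∈ Finset.range (n+1), y i) * y (n+1) ≤ ∏ i ∈ Finset.range (n+1), y i :=
        mul_le_of_le_one_right hznn (hy (n+1)).2
      rw [h2, h1]
      linarith
    calc gsurv μ T (snn (n+1) y) * gsurv μ T (snn (n+1) y)
        = gsurv μ T (snn n y + ∏ i ∈ Finset.range (n+1), y i)
            * gsurv μ T (snn n y + ∏ i ∈ Finset.range (n+1), y i) := by rw [h1]
      _ ≤ gsurv μ T (snn n y) * gsurv μ T (snn n y + 2 * ∏ i ∈ Finset.range (n+1), y i) :=
          measure_le_logconvex μ hT hDFR_ hsnn0 hznn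
      _ ≤ gsurv μ T (snn n y) * gsurv μ T (snn (n+2) y) :=
          mul_le_mul_right (hganti hle) _
  have emul : ∀ x : ℝ≥0∞, (x * x) ^ (1/2 : ℝ) = x := fun x => by
    rw [show x * x = x ^ ((2:ℕ) : ℝ) from by rw [ENNReal.rpow_natCast, pow_two],
      ← ENNReal.rpow_mul]
    norm_num
  have e2 : ∀ x : ℝ≥0∞, (x ^ (1/2 : ℝ)) ^ (2 : ℝ) = x := fun x => by
    rw [← ENNReal.rpow_mul]
    norm_num
  have hCS : (∫⁻ y, gsurv μ T (snn (n+1) y) ∂ν)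
      ≤ (∫⁻ y, gsurv μ T (snn n y) ∂ν) ^ (1/2 : ℝ)
        * (∫⁻ y, gsurv μ T (snn (n+2) y) ∂ν) ^ (1/2 : ℝ) := by
    have step1 : (∫⁻ y, gsurv μ T (snn (n+1) y) ∂ν)
        ≤ ∫⁻ y, ((fun y => gsurv μ T (snn n y) ^ (1/2 : ℝ))
            * (fun y => gsurv μ T (snn (n+2) y) ^ (1/2 : ℝ))) y ∂ν := by
      refine lintegral_mono_ae ?_
      filter_upwards [hpt] with y hy
      calc gsurv μ T (snn (n+1) y)
          = (gsurv μ T (snn (n+1) y) * gsurv μ T (snn (n+1) y)) ^ (1/2 : ℝ) := (emul _).symm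
        _ ≤ (gsurv μ T (snn n y) * gsurv μ T (snn (n+2) y)) ^ (1/2 : ℝ) :=
            ENNReal.rpow_le_rpow hy (by norm_num)
        _ = _ := by
            rw [ENNReal.mul_rpow_of_nonneg _ _ (by norm_num : (0:ℝ) ≤ 1/2)]
            rfl
    have step2 := ENNReal.lintegral_mul_le_Lp_mul_Lq ν
      (⟨by norm_num, by norm_num, by norm_num⟩ : Real.HolderConjugate 2 2)
      (f := fun y => gsurv μ T (snn n y) ^ (1/2 : ℝ))
      (g := fun y => gsurv μ T (snn (n+2) y) ^ (1/2 : ℝ))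
      ((hm n).pow_const (1/2 : ℝ)) ((hm (n+2)).pow_const (1/2 : ℝ))
    refine le_trans step1 (le_trans step2 ?_)
    simp only [e2]
    norm_num
  calc (∫⁻ y, gsurv μ T (snn (n+1) y) ∂ν) ^ 2
      ≤ ((∫⁻ y, gsurv μ T (snn n y) ∂ν) ^ (1/2 : ℝ)
          * (∫⁻ y, gsurv μ T (snn (n+2) y) ∂ν) ^ (1/2 : ℝ)) ^ 2 :=
        pow_le_pow_left' hCS 2
    _ = (∫⁻ y, gsurv μ T (snn n y) ∂ν) * (∫⁻ y, gsurv μ T (snn (n+2) y) ∂ν) := by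
        rw [mul_pow, ← ENNReal.rpow_natCast (_ ^ (1/2 : ℝ)) 2,
          ← ENNReal.rpow_natCast (_ ^ (1/2 : ℝ)) 2, ← ENNReal.rpow_mul, ← ENNReal.rpow_mul]
        norm_num

end Helpers

/-- Let `Y 0, Y 1, …` be independent `[0,1]`-valued random
variables and define interarrival times `X n = Y 0 · Y 1 ⋯ Y n`
(mathematically `X_n = ∏_{i=1}^n Y_i`), with counting process `N`. If `T` is a
DFR nonnegative random time independent of the process and
`P(T = 0)·P(Y_1 = 0) = 0`, then `N(T)` is d-DFR. -/
theorem stmt8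
    (μ : Measure Ω) [IsProbabilityMeasure μ]
    (Y : ℕ → Ω → ℝ) (T : Ω → ℝ)
    (hYmeas : ∀ n, Measurable (Y n))
    (hYmem : ∀ n ω, Y n ω ∈ Set.Icc (0 : ℝ) 1)
    (hYindep : iIndepFun Y μ)
    (hTmeas : Measurable T) (hTnonneg : ∀ ω, 0 ≤ T ω)
    (hindep : IndepFun T (fun ω n => Y n ω) μ)
    (hDFR : IsDFR μ T)
    (hb : μ {ω | T ω = 0} * μ {ω | Y 0 ω = 0} = 0) :
    IsdDFR μ (fun ω =>
      countN (fun n ω' => ∏ i ∈ Finset.range (n + 1), Y i ω') (T ω) ω) := by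
  classical
  intro n
  have hV : Measurable (fun ω => (fun k => Y k ω)) := measurable_pi_lambda _ hYmeas
  haveI hνp : IsProbabilityMeasure (μ.map (fun ω k => Y k ω)) :=
    Measure.isProbabilityMeasure_map hV.aemeasurable
  haveI hTp : IsProbabilityMeasure (μ.map T) := Measure.isProbabilityMeasure_map hTmeas.aemeasurable
  have hXnn : ∀ (m : ℕ) (ω' : Ω), 0 ≤ ∏ i ∈ Finset.range (m + 1), Y i ω' :=
    fun m ω' => Finset.prod_nonneg fun i _ => (hYmem i ω').1
  have hprod : μ.map (fun ω => ((fun k => Y k ω), T ω))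
      = (μ.map (fun ω k => Y k ω)).prod (μ.map T) :=
    (indepFun_iff_map_prod_eq_prod_map_map hV.aemeasurable hTmeas.aemeasurable).mp hindep.symm
  have hsetm : ∀ m : ℕ,
      {ω | (m : ℕ∞) ≤ countN (fun k ω' => ∏ i ∈ Finset.range (k + 1), Y i ω') (T ω) ω}
        = {ω | snn m (fun k => Y k ω) ≤ T ω} := by
    intro m
    ext ω
    simp only [Set.mem_setOf_eq]
    rw [countN_ge_iff _ hXnn (hTnonneg ω) ω m]
    exact Iff.rfl
  have hrepr : ∀ m : ℕ, μ {ω | snn m (fun k => Y k ω) ≤ T ω}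
      = ∫⁻ y, gsurv μ T (snn m y) ∂(μ.map (fun ω k => Y k ω)) := by
    intro m
    have hCmeas : MeasurableSet {p : (ℕ → ℝ) × ℝ | snn m p.1 ≤ p.2} :=
      measurableSet_le ((snn_measurable m).comp measurable_fst) measurable_snd
    have e1 : μ {ω | snn m (fun k => Y k ω) ≤ T ω}
        = (μ.map (fun ω => ((fun k => Y k ω), T ω))) {p : (ℕ → ℝ) × ℝ | snn m p.1 ≤ p.2} := by
      rw [Measure.map_apply (hV.prodMk hTmeas) hCmeas]
      rfl
    rw [e1, hprod, Measure.prod_apply hCmeas]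
    refine lintegral_congr fun y => ?_
    have e3 : (Prod.mk y ⁻¹' {p : (ℕ → ℝ) × ℝ | snn m p.1 ≤ p.2}) = Set.Ici (snn m y) := rfl
    rw [e3, Measure.map_apply hTmeas measurableSet_Ici]
    rfl
  have hmeasset : MeasurableSet {y : ℕ → ℝ | ∀ i, y i ∈ Set.Icc (0:ℝ) 1} := by
    have e : {y : ℕ → ℝ | ∀ i, y i ∈ Set.Icc (0:ℝ) 1}
        = ⋂ i, (fun y : ℕ → ℝ => y i) ⁻¹' Set.Icc (0:ℝ) 1 := by
      ext y; simp
    rw [e]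
    exact MeasurableSet.iInter fun i => (measurable_pi_apply i) measurableSet_Icc
  have hae : ∀ᵐ y ∂(μ.map (fun ω k => Y k ω)), ∀ i, y i ∈ Set.Icc (0:ℝ) 1 := by
    rw [ae_map_iff hV.aemeasurable hmeasset]
    exact ae_of_all _ fun ω i => hYmem i ω
  have key : ∀ m : ℕ,
      μ {ω | (m : ℕ∞) ≤ countN (fun k ω' => ∏ i ∈ Finset.range (k + 1), Y i ω') (T ω) ω}
        = ∫⁻ y, gsurv μ T (snn m y) ∂(μ.map (fun ω k => Y k ω)) := fun m => by
    rw [hsetm m, hrepr m]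
  have h1 : ((n : ℕ∞) + 1) = ((n + 1 : ℕ) : ℕ∞) := by norm_cast
  have h2 : ((n : ℕ∞) + 2) = ((n + 2 : ℕ) : ℕ∞) := by norm_cast
  show μ {ω | (n : ℕ∞) + 1
        ≤ countN (fun k ω' => ∏ i ∈ Finset.range (k + 1), Y i ω') (T ω) ω} ^ 2
      ≤ μ {ω | (n : ℕ∞)
        ≤ countN (fun k ω' => ∏ i ∈ Finset.range (k + 1), Y i ω') (T ω) ω}
      * μ {ω | (n : ℕ∞) + 2
        ≤ countN (fun k ω' => ∏ i ∈ Finset.range (k + 1), Y i ω') (T ω) ω}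
  rw [h1, h2, key (n + 1), key n, key (n + 2)]
  exact core μ hTmeas hDFR _ hae n
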